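/- Let A ∈ ℝ^{m×p}, B ∈ ℝ^{m×q}, and c ∈ ℝ^m, and assume there exist x, y with Ax + By = c. Let P_B denote the orthogonal projection onto col(B). Define x* = ((I − P_B)A)⁺ (I − P_B)c (the minimal-norm least squares solution of min_x ‖(I−P_B)Ax − (I−P_B)c‖²) and y* = B⁺(P_B c − P_B A x*) (the minimal-norm least squares solution of min_y ‖By − P_B c + P_B A x*‖²). Then Ax* + By* = c, and for every pair (x', y') with Ax' + By' = c: ‖x*‖ ≤ ‖x'‖, and if ‖x*‖ = ‖x'‖ then x* = x' and ‖y*‖ ≤ ‖y'‖. -/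

import Mathlib

open MeasureTheory ProbabilityTheory Matrix Finset

noncomputable section

/-- The four Moore–Penrose conditions characterizing the pseudoinverse. -/
def IsMoorePenrose {m n : Type*} [Fintype m] [Fintype n]
    (A : Matrix m n ℝ) (B : Matrix n m ℝ) : Prop :=
  A * B * A = A ∧ B * A * B = B ∧ (A * B)ᵀ = A * B ∧ (B * A)ᵀ = B * A

/-- Euclidean norm of a finite-dimensional real vector. -/
def eNorm {ι : Type*} [Fintype ι] (v : ι → ℝ) : ℝ := Real.sqrt (v ⬝ᵥ v)

/-- Orthogonal decomposition w.r.t. a submodule of `Fin m → ℝ` with the dot product. -/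
lemma exists_orth_decomp {m : ℕ} (S : Submodule ℝ (Fin m → ℝ)) (v : Fin m → ℝ) :
    ∃ s ∈ S, ∀ t ∈ S, (v - s) ⬝ᵥ t = 0 := by
  let e : EuclideanSpace ℝ (Fin m) ≃ₗ[ℝ] (Fin m → ℝ) := WithLp.linearEquiv 2 ℝ (Fin m → ℝ)
  let S' : Submodule ℝ (EuclideanSpace ℝ (Fin m)) := S.comap e.toLinearMap
  set v' : EuclideanSpace ℝ (Fin m) := e.symm v with hv'
  set s' := (Submodule.orthogonalProjectionOnto S' v' : EuclideanSpace ℝ (Fin m)) with hs'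
  refine ⟨e s', ?_, ?_⟩
  · exact (Submodule.orthogonalProjectionOnto S' v').2
  · intro t ht
    have horth := Submodule.sub_starProjection_mem_orthogonal (K := S') v'
    have h0 : inner ℝ (e.symm t) (v' - s') = (0 : ℝ) := horth (e.symm t) (by simpa [S'] using ht)
    have h1 : ∑ i, (e.symm t) i * (v' - s') i = 0 := by
      simpa [PiLp.inner_apply, RCLike.inner_apply, conj_trivial, mul_comm] using h0
    have h2 : ∑ i, (v' - s') i * (e.symm t) i = 0 := by
      rw [← h1]; exact Finset.sum_congr rfl fun i _ => mul_comm _ _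
    simpa [dotProduct, e, v', sub_mul, Finset.sum_sub_distrib] using h2

lemma dot_self_nonneg {ι : Type*} [Fintype ι] (v : ι → ℝ) : 0 ≤ v ⬝ᵥ v :=
  Finset.sum_nonneg fun _ _ => mul_self_nonneg _

/-- `Mp * M` is an orthogonal projection, so `(Mp * M) *ᵥ x` is the minimal-norm point. -/
lemma min_norm {k n : Type*} [Fintype k] [Fintype n]
    (M : Matrix k n ℝ) (Mp : Matrix n k ℝ) (h : IsMoorePenrose M Mp) (x : n → ℝ) :
    eNorm ((Mp * M) *ᵥ x) ≤ eNorm x ∧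
      (eNorm ((Mp * M) *ᵥ x) = eNorm x → (Mp * M) *ᵥ x = x) := by
  set P := Mp * M with hP
  set xs := P *ᵥ x with hxs
  have hP2 : P * P = P := by
    have h21 := h.2.1
    rw [hP]
    calc Mp * M * (Mp * M) = (Mp * M * Mp) * M := by
          rw [Matrix.mul_assoc (Mp * M) Mp M, Matrix.mul_assoc Mp M (Mp * M)]
    _ = Mp * M := by rw [h21]
  have hPt : Pᵀ = P := h.2.2.2
  have horth : xs ⬝ᵥ (x - xs) = 0 := by
    have : xs ⬝ᵥ (x - xs) = x ⬝ᵥ (P *ᵥ (x - xs)) := by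
      rw [dotProduct_comm, Matrix.dotProduct_mulVec, ← Matrix.mulVec_transpose, hPt,
        dotProduct_comm]
    rw [this, Matrix.mulVec_sub, hxs, Matrix.mulVec_mulVec, hP2, sub_self,
      dotProduct_zero]
  have hexp : x ⬝ᵥ x = xs ⬝ᵥ xs + (x - xs) ⬝ᵥ (x - xs) := by
    have hx : x = xs + (x - xs) := by ring_nf
    nth_rewrite 1 [hx]; nth_rewrite 2 [hx]
    rw [add_dotProduct, dotProduct_add, dotProduct_add,
      horth, dotProduct_comm (x - xs) xs, horth]
    ring
  have hle : xs ⬝ᵥ xs ≤ x ⬝ᵥ x := by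
    rw [hexp]; linarith [dot_self_nonneg (x - xs)]
  constructor
  · exact Real.sqrt_le_sqrt hle
  · intro heq
    have h1 : xs ⬝ᵥ xs = x ⬝ᵥ x := by
      have := congrArg (fun r => r ^ 2) heq
      simpa [eNorm, Real.sq_sqrt (dot_self_nonneg xs), Real.sq_sqrt (dot_self_nonneg x)]
        using this
    have h2 : (x - xs) ⬝ᵥ (x - xs) = 0 := by linarith [hexp]
    exact (sub_eq_zero.mp (dotProduct_self_eq_zero.mp h2)).symm

/-- Two-stage construction of the solution of `min ‖Ax + By − c‖` that has lexicographically
minimal norms `(‖x‖, ‖y‖)`:  `x* = ((I − P_B)A)⁺ (I − P_B)c` and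
`y* = B⁺ (P_B c − P_B A x*)`, where `P_B` is the orthogonal projection onto `col(B)`.
Then `A x* + B y* = c`, and for every pair `(x', y')` with `A x' + B y' = c` we have
`‖x*‖ ≤ ‖x'‖`, and if `‖x*‖ = ‖x'‖` then `x* = x'` and `‖y*‖ ≤ ‖y'‖`. -/
theorem stmt_7 (m p q : ℕ)
    (A : Matrix (Fin m) (Fin p) ℝ) (B : Matrix (Fin m) (Fin q) ℝ) (c : Fin m → ℝ)
    (hex : ∃ (x : Fin p → ℝ) (y : Fin q → ℝ), A.mulVec x + B.mulVec y = c)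
    -- P_B is the orthogonal projection onto the column span of B
    (PB : Matrix (Fin m) (Fin m) ℝ)
    (hPB1 : ∀ v ∈ LinearMap.range B.mulVecLin, PB.mulVec v = v)
    (hPB2 : ∀ w : Fin m → ℝ, (∀ v ∈ LinearMap.range B.mulVecLin, w ⬝ᵥ v = 0) →
      PB.mulVec w = 0)
    -- pseudoinverses
    (Mp : Matrix (Fin p) (Fin m) ℝ) (hMp : IsMoorePenrose ((1 - PB) * A) Mp)
    (Bp : Matrix (Fin q) (Fin m) ℝ) (hBp : IsMoorePenrose B Bp)
    -- the two-stage minimal-norm least squares solutions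
    (xs : Fin p → ℝ) (hxs : xs = Mp.mulVec ((1 - PB).mulVec c))
    (ys : Fin q → ℝ) (hys : ys = Bp.mulVec (PB.mulVec c - PB.mulVec (A.mulVec xs))) :
    A.mulVec xs + B.mulVec ys = c ∧
    ∀ (x' : Fin p → ℝ) (y' : Fin q → ℝ), A.mulVec x' + B.mulVec y' = c →
      eNorm xs ≤ eNorm x' ∧ (eNorm xs = eNorm x' → xs = x' ∧ eNorm ys ≤ eNorm y') := by
  obtain ⟨x₀, y₀, h₀⟩ := hex
  set M : Matrix (Fin m) (Fin p) ℝ := (1 - PB) * A with hM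
  -- PB fixes col(B)
  have hPBB : ∀ y : Fin q → ℝ, PB *ᵥ (B *ᵥ y) = B *ᵥ y := fun y =>
    hPB1 _ ⟨y, by simp [Matrix.mulVecLin_apply]⟩
  -- PB maps into col(B)
  have hPBrange : ∀ v : Fin m → ℝ, ∃ y, PB *ᵥ v = B *ᵥ y := by
    intro v
    obtain ⟨s, hs, horth⟩ := exists_orth_decomp (LinearMap.range B.mulVecLin) v
    obtain ⟨y, hy⟩ := hs
    have h1 : PB *ᵥ s = s := hPB1 s ⟨y, hy⟩
    have h2 : PB *ᵥ (v - s) = 0 := hPB2 _ horth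
    refine ⟨y, ?_⟩
    have hv : PB *ᵥ v = PB *ᵥ s + PB *ᵥ (v - s) := by
      rw [← Matrix.mulVec_add, add_sub_cancel]
    rw [hv, h1, h2, add_zero, ← hy, Matrix.mulVecLin_apply]
  have hN0 : ∀ y' : Fin q → ℝ, (1 - PB) *ᵥ (B *ᵥ y') = 0 := by
    intro y'
    rw [Matrix.sub_mulVec, Matrix.one_mulVec, hPBB, sub_self]
  -- every feasible x' solves the reduced system
  have hsol : ∀ (x' : Fin p → ℝ) (y' : Fin q → ℝ), A *ᵥ x' + B *ᵥ y' = c →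
      M *ᵥ x' = (1 - PB) *ᵥ c := by
    intro x' y' h'
    rw [← h', Matrix.mulVec_add, hN0, add_zero, Matrix.mulVec_mulVec]
  have hMxs : M *ᵥ xs = (1 - PB) *ᵥ c := by
    have h₀' := hsol x₀ y₀ h₀
    rw [hxs, ← h₀', Matrix.mulVec_mulVec, Matrix.mulVec_mulVec, hMp.1]
  -- B *ᵥ ys equals the target of the second stage
  have key : PB *ᵥ c - PB *ᵥ (A *ᵥ xs) = PB *ᵥ (c - A *ᵥ xs) :=
    (Matrix.mulVec_sub PB c (A *ᵥ xs)).symm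
  obtain ⟨y₁, hy₁⟩ := hPBrange (c - A *ᵥ xs)
  have hBys : B *ᵥ ys = PB *ᵥ c - PB *ᵥ (A *ᵥ xs) := by
    rw [hys, key, hy₁, Matrix.mulVec_mulVec, Matrix.mulVec_mulVec, hBp.1, ← hy₁, ← key]
  have hh : A *ᵥ xs - PB *ᵥ (A *ᵥ xs) = (1 - PB) *ᵥ c := by
    rw [← hMxs, hM, ← Matrix.mulVec_mulVec, Matrix.sub_mulVec, Matrix.one_mulVec]
  have feas : A *ᵥ xs + B *ᵥ ys = c := by
    rw [hBys]
    calc A *ᵥ xs + (PB *ᵥ c - PB *ᵥ (A *ᵥ xs))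
        = (A *ᵥ xs - PB *ᵥ (A *ᵥ xs)) + PB *ᵥ c := by abel
    _ = ((1 - PB) *ᵥ c) + PB *ᵥ c := by rw [hh]
    _ = c := by rw [Matrix.sub_mulVec, Matrix.one_mulVec]; abel
  refine ⟨feas, ?_⟩
  intro x' y' h'
  have hMx' : M *ᵥ x' = (1 - PB) *ᵥ c := hsol x' y' h'
  have hxs' : xs = (Mp * M) *ᵥ x' := by
    rw [hxs, ← hMx', Matrix.mulVec_mulVec]
  obtain ⟨hle, heq⟩ := min_norm M Mp hMp x'
  rw [← hxs'] at hle heq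
  refine ⟨hle, fun he => ?_⟩
  have hxx : xs = x' := heq he
  refine ⟨hxx, ?_⟩
  have hBy' : B *ᵥ y' = B *ᵥ ys := by
    have h1 : B *ᵥ y' = c - A *ᵥ xs := by rw [hxx, eq_sub_iff_add_eq, add_comm]; exact h'
    have h2 : B *ᵥ ys = c - A *ᵥ xs := by rw [eq_sub_iff_add_eq, add_comm]; exact feas
    rw [h1, h2]
  have hys2 : ys = (Bp * B) *ᵥ y' := by
    rw [hys, ← hBys, ← hBy', Matrix.mulVec_mulVec]
  obtain ⟨hle2, _⟩ := min_norm B Bp hBp y'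
  rw [hys2]
  exact hle2
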